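/- Let F : Γ → ℂ, n ∈ ℕ, and σ ∈ Γ, and set Ψ_n = ∑_{k=0}^{n} 𝔈_k(𝔞_k†(𝔞_k F)). Then Ψ_n(σ) = 0 if σ = ∅; Ψ_n(σ) = 0 if σ ≠ ∅ and n < max σ; and Ψ_n(σ) = F(σ) if σ ≠ ∅ and n ≥ max σ. -/

import Mathlib

open scoped BigOperators

/-- The annihilation operator: `(𝔞_k F)(σ) = F(σ ∪ {k})` if `k ∉ σ`, else `0`. -/
def ann (k : ℕ) (F : Finset ℕ → ℂ) : Finset ℕ → ℂ :=
  fun σ => if k ∈ σ then 0 else F (insert k σ)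

/-- The creation operator: `(𝔞_k† F)(σ) = F(σ \ {k})` if `k ∈ σ`, else `0`. -/
def cre (k : ℕ) (F : Finset ℕ → ℂ) : Finset ℕ → ℂ :=
  fun σ => if k ∈ σ then F (σ.erase k) else 0

/-- The conditional expectation operator:
`(𝔈_k F)(σ) = F(σ)` if every `j ∈ σ` satisfies `j ≤ k`, else `0`. -/
def cexp (k : ℕ) (F : Finset ℕ → ℂ) : Finset ℕ → ℂ :=
  fun σ => if ∀ j ∈ σ, j ≤ k then F σ else 0

/-- Values of the Clark–Ocone partial sums `Ψ_n = ∑_{k=0}^n 𝔈_k 𝔞_k† 𝔞_k F`: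
`Ψ_n(∅) = 0`; `Ψ_n(σ) = 0` if `σ ≠ ∅` and `n < max σ`; and `Ψ_n(σ) = F(σ)` if
`σ ≠ ∅` and `n ≥ max σ`. -/
theorem stmt9 (F : Finset ℕ → ℂ) (n : ℕ) (σ : Finset ℕ) :
    (σ = ∅ → (∑ k ∈ Finset.range (n + 1), cexp k (cre k (ann k F)) σ) = 0) ∧
    (∀ hσ : σ.Nonempty, n < σ.max' hσ →
      (∑ k ∈ Finset.range (n + 1), cexp k (cre k (ann k F)) σ) = 0) ∧
    (∀ hσ : σ.Nonempty, σ.max' hσ ≤ n →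
      (∑ k ∈ Finset.range (n + 1), cexp k (cre k (ann k F)) σ) = F σ) := by
  refine ⟨?_, ?_, ?_⟩
  · intro h
    subst h
    apply Finset.sum_eq_zero
    intro k _
    simp [cexp, cre]
  · intro hσ hn
    apply Finset.sum_eq_zero
    intro k hk
    rw [Finset.mem_range] at hk
    have : ¬ ∀ j ∈ σ, j ≤ k := by
      intro hall
      have := hall _ (σ.max'_mem hσ)
      omega
    simp [cexp, this]
  · intro hσ hn
    rw [Finset.sum_eq_single (σ.max' hσ)]
    · have hmem := σ.max'_mem hσ
      have hall : ∀ j ∈ σ, j ≤ σ.max' hσ := fun j hj => σ.le_max' j hj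
      simp only [cexp, cre, ann, hall, hmem, if_true, Finset.mem_erase,
        ne_eq, not_true_eq_false, false_and, if_false, Finset.insert_erase hmem,
        if_pos hall]
    · intro k hk hne
      by_cases hkσ : k ∈ σ
      · have : ¬ ∀ j ∈ σ, j ≤ k := by
          intro hall
          exact hne (le_antisymm (σ.le_max' k hkσ) (hall _ (σ.max'_mem hσ)))
        simp [cexp, this]
      · simp [cexp, cre, hkσ]
    · intro h
      exact absurd (Finset.mem_range.mpr (by omega)) h
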